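/- Let Z be a nonempty compact subset of ℝ^{n+1}, let U and V be nonempty compact metric spaces, and let F : ℝ^{n+1} × U × V → ℝ^{n+1} and ℓ : ℝ^{n+1} × U × V → ℝ be bounded continuous functions. Then the following three conditions are equivalent. (IC3): for every Borel probability measure μ on Z and every continuous p : Z → ℝ^{n+1}, inf_{u∈U} sup_{v∈V} ∫_Z [F(z,u,v)·p(z) + ℓ(z,u,v)] dμ(z) = sup_{v∈V} inf_{u∈U} ∫_Z [F(z,u,v)·p(z) + ℓ(z,u,v)] dμ(z). (IC4): for every I ≥ 1, all q₁,…,q_I ≥ 0 with Σᵢ qᵢ = 1, all z₁,…,z_I ∈ Z and all p₁,…,p_I ∈ ℝ^{n+1}, inf_{u∈U} sup_{v∈V} Σᵢ qᵢ [F(zᵢ,u,v)·pᵢ + ℓ(zᵢ,u,v)] = sup_{v∈V} inf_{u∈U} Σᵢ qᵢ [F(zᵢ,u,v)·pᵢ + ℓ(zᵢ,u,v)]. (IC5): for every Borel probability measure μ on Z, every continuous Φ : Z → Z and every continuous p : Z → ℝ^{n+1}, inf_{u∈U} sup_{v∈V} ∫_Z [F(Φ(z),u,v)·p(z) + ℓ(Φ(z),u,v)]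 dμ(z) = sup_{v∈V} inf_{u∈U} ∫_Z [F(Φ(z),u,v)·p(z) + ℓ(Φ(z),u,v)] dμ(z). -/

import Mathlib

open MeasureTheory Set

noncomputable section

abbrev Euc (n : ℕ) : Type := EuclideanSpace ℝ (Fin (n + 1))

/-- The integrand `F(w,u,v)·p + ℓ(w,u,v)` appearing in the Isaacs conditions. -/
def icIntegrand {n : ℕ} {U V : Type}
    (F : Euc n → U → V → Euc n) (l : Euc n → U → V → ℝ)
    (w p : Euc n) (u : U) (v : V) : ℝ :=
  (inner ℝ (F w u v) p : ℝ) + l w u v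



section Minimax
variable {U V : Type} [Nonempty U] [Nonempty V]

lemma supinf_le_infsup (g : U → V → ℝ) (C : ℝ) (hg : ∀ u v, |g u v| ≤ C) :
    (⨆ v, ⨅ u, g u v) ≤ ⨅ u, ⨆ v, g u v := by
  have hbB : ∀ v, BddBelow (range fun u => g u v) := fun v =>
    ⟨-C, by rintro x ⟨u, rfl⟩; linarith [(abs_le.mp (hg u v)).1]⟩
  have hbA : ∀ u, BddAbove (range fun v => g u v) := fun u =>
    ⟨C, by rintro x ⟨v, rfl⟩; exact (abs_le.mp (hg u v)).2⟩
  exact ciSup_le fun v => le_ciInf fun u =>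
    (ciInf_le (hbB v) u).trans (le_ciSup (hbA u) v)

lemma infsup_le_infsup_add (g h : U → V → ℝ) (ε C : ℝ)
    (hg : ∀ u v, |g u v| ≤ C) (hh : ∀ u v, |h u v| ≤ C)
    (hle : ∀ u v, g u v ≤ h u v + ε) :
    (⨅ u, ⨆ v, g u v) ≤ (⨅ u, ⨆ v, h u v) + ε := by
  have hbA : ∀ (k : U → V → ℝ), (∀ u v, |k u v| ≤ C) → ∀ u, BddAbove (range fun v => k u v) :=
    fun k hk u => ⟨C, by rintro x ⟨v, rfl⟩; exact (abs_le.mp (hk u v)).2⟩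
  have hbBg : BddBelow (range fun u => ⨆ v, g u v) := by
    refine ⟨-C, ?_⟩
    rintro x ⟨u, rfl⟩
    exact le_trans (by linarith [(abs_le.mp (hg u Classical.ofNonempty)).1])
      (le_ciSup (hbA g hg u) Classical.ofNonempty)
  have step : ∀ u₀ : U, (⨅ u, ⨆ v, g u v) ≤ (⨆ v, h u₀ v) + ε := by
    intro u₀
    refine (ciInf_le hbBg u₀).trans (ciSup_le fun v => ?_)
    exact (hle u₀ v).trans (add_le_add_left (le_ciSup (hbA h hh u₀) v) ε)
  have : (⨅ u, ⨆ v, g u v) - ε ≤ ⨅ u₀, ⨆ v, h u₀ v :=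
    le_ciInf fun u₀ => by linarith [step u₀]
  linarith

lemma supinf_le_supinf_add (g h : U → V → ℝ) (ε C : ℝ)
    (hg : ∀ u v, |g u v| ≤ C) (hh : ∀ u v, |h u v| ≤ C)
    (hle : ∀ u v, h u v ≤ g u v + ε) :
    (⨆ v, ⨅ u, h u v) ≤ (⨆ v, ⨅ u, g u v) + ε := by
  have hbB : ∀ (k : U → V → ℝ), (∀ u v, |k u v| ≤ C) → ∀ v, BddBelow (range fun u => k u v) :=
    fun k hk v => ⟨-C, by rintro x ⟨u, rfl⟩; linarith [(abs_le.mp (hk u v)).1]⟩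
  have hbAg : BddAbove (range fun v => ⨅ u, g u v) := by
    refine ⟨C, ?_⟩
    rintro x ⟨v, rfl⟩
    exact (ciInf_le (hbB g hg v) Classical.ofNonempty).trans
      (abs_le.mp (hg Classical.ofNonempty v)).2
  refine ciSup_le fun v₀ => ?_
  have h1 : (⨅ u, h u v₀) - ε ≤ ⨅ u, g u v₀ :=
    le_ciInf fun u => by linarith [ciInf_le (hbB h hh v₀) u, hle u v₀]
  have h2 : (⨅ u, g u v₀) ≤ ⨆ v, ⨅ u, g u v := le_ciSup hbAg v₀
  linarith

lemma isc_of_approx (g : U → V → ℝ) (C : ℝ) (hg : ∀ u v, |g u v| ≤ C)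
    (happ : ∀ ε : ℝ, 0 < ε → ∃ h : U → V → ℝ,
      (∀ u v, |g u v - h u v| ≤ ε) ∧ ((⨅ u, ⨆ v, h u v) = ⨆ v, ⨅ u, h u v)) :
    (⨅ u, ⨆ v, g u v) = ⨆ v, ⨅ u, g u v := by
  refine le_antisymm ?_ (supinf_le_infsup g C hg)
  refine le_of_forall_pos_le_add fun ε hε => ?_
  obtain ⟨h, hgh, hisc⟩ := happ (ε / 2) (by linarith)
  have hhb : ∀ u v, |h u v| ≤ C + ε / 2 := fun u v => by
    have := hgh u v; have := hg u v
    rw [abs_le] at *; constructor <;> linarith [this.1, this.2]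
  have hgb' : ∀ u v, |g u v| ≤ C + ε / 2 := fun u v => (hg u v).trans (by linarith)
  have h1 : (⨅ u, ⨆ v, g u v) ≤ (⨅ u, ⨆ v, h u v) + ε / 2 :=
    infsup_le_infsup_add g h (ε / 2) (C + ε / 2) hgb' hhb
      (fun u v => by linarith [(abs_le.mp (hgh u v)).2])
  have h2 : (⨆ v, ⨅ u, h u v) ≤ (⨆ v, ⨅ u, g u v) + ε / 2 :=
    supinf_le_supinf_add g h (ε / 2) (C + ε / 2) hgb' hhb
      (fun u v => by linarith [(abs_le.mp (hgh u v)).1])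
  linarith [hisc ▸ h1]

end Minimax



lemma exists_sep {E : Type*} [MetricSpace E] (S : Finset E) :
    ∃ δ : ℝ, 0 < δ ∧ ∀ w ∈ S, ∀ w' ∈ S, w ≠ w' → δ ≤ dist w w' := by
  classical
  set T : Finset (E × E) := (S ×ˢ S).filter (fun p => p.1 ≠ p.2) with hT
  by_cases hTe : T.Nonempty
  · refine ⟨T.inf' hTe (fun p => dist p.1 p.2), ?_, ?_⟩
    · rw [Finset.lt_inf'_iff]
      intro p hp
      simp only [hT, Finset.mem_filter] at hp
      exact dist_pos.mpr hp.2
    · intro w hw w' hw' hne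
      have hm : (w, w') ∈ T := by
        rw [hT, Finset.mem_filter, Finset.mem_product]; exact ⟨⟨hw, hw'⟩, hne⟩
      exact Finset.inf'_le _ hm
  · refine ⟨1, one_pos, fun w hw w' hw' hne => absurd ?_ hTe⟩
    refine ⟨(w, w'), ?_⟩
    rw [hT, Finset.mem_filter, Finset.mem_product]; exact ⟨⟨hw, hw'⟩, hne⟩

lemma exists_continuous_eq_on_finset {E F : Type*} [MetricSpace E]
    [NormedAddCommGroup F] [NormedSpace ℝ F] (S : Finset E) (val : E → F) :
    ∃ f : E → F, Continuous f ∧ ∀ w ∈ S, f w = val w := by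
  classical
  obtain ⟨δ, hδ, hsep⟩ := exists_sep S
  refine ⟨fun x => ∑ w ∈ S, (max 0 (1 - dist x w / δ)) • val w, ?_, ?_⟩
  · refine continuous_finset_sum _ fun w _ => Continuous.smul ?_ continuous_const
    have h1 : Continuous fun x : E => 1 - dist x w / δ :=
      continuous_const.sub ((continuous_id.dist continuous_const).div_const δ)
    exact continuous_const.max h1
  · intro w₀ hw₀
    show (∑ w ∈ S, (max 0 (1 - dist w₀ w / δ)) • val w) = val w₀
    rw [Finset.sum_eq_single w₀]
    · simp [dist_self]
    · intro w hw hne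
      have : δ ≤ dist w₀ w := hsep w₀ hw₀ w hw (Ne.symm hne)
      have : max 0 (1 - dist w₀ w / δ) = 0 := by
        apply max_eq_left
        have : 1 ≤ dist w₀ w / δ := (one_le_div hδ).mpr this
        linarith
      simp [this]
    · intro h; exact absurd hw₀ h


lemma exists_abs_bound {X : Type*} [TopologicalSpace X] [CompactSpace X]
    {f : X → ℝ} (hf : Continuous f) : ∃ C : ℝ, ∀ x, |f x| ≤ C := by
  obtain ⟨C, hC⟩ :=
    (isCompact_univ.image_of_continuousOn hf.continuousOn).isBounded.subset_closedBall 0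
  exact ⟨C, fun x => by simpa [Real.dist_eq] using hC ⟨x, mem_univ x, rfl⟩⟩

lemma ic4_to_ic5
    {n : ℕ} {Zs : Set (Euc n)} (hZc : IsCompact Zs) (hZn : Zs.Nonempty)
    {U V : Type} [MetricSpace U] [CompactSpace U] [Nonempty U]
    [MetricSpace V] [CompactSpace V] [Nonempty V]
    {F : Euc n → U → V → Euc n} {l : Euc n → U → V → ℝ}
    (hFc : Continuous fun q : Euc n × U × V => F q.1 q.2.1 q.2.2)
    (hlc : Continuous fun q : Euc n × U × V => l q.1 q.2.1 q.2.2)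
    (h4 : ∀ I : ℕ, 1 ≤ I → ∀ q : Fin I → ℝ, (∀ i, 0 ≤ q i) → (∑ i, q i) = 1 →
        ∀ z : Fin I → Euc n, (∀ i, z i ∈ Zs) → ∀ p : Fin I → Euc n,
          (⨅ u : U, ⨆ v : V, ∑ i, q i * icIntegrand F l (z i) (p i) u v) =
            ⨆ v : V, ⨅ u : U, ∑ i, q i * icIntegrand F l (z i) (p i) u v) :
    ∀ μ : Measure ↥Zs, IsProbabilityMeasure μ →
      ∀ Φ : C(↥Zs, ↥Zs), ∀ p : C(↥Zs, Euc n),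
        (⨅ u : U, ⨆ v : V, ∫ z, icIntegrand F l ((Φ z : Euc n)) (p z) u v ∂μ) =
          ⨆ v : V, ⨅ u : U, ∫ z, icIntegrand F l ((Φ z : Euc n)) (p z) u v ∂μ := by
  classical
  intro μ hμ Φ p
  haveI : CompactSpace ↥Zs := isCompact_iff_compactSpace.mp hZc
  haveI : Nonempty ↥Zs := hZn.to_subtype
  set h : ↥Zs → U → V → ℝ := fun x u v => icIntegrand F l ((Φ x : Euc n)) (p x) u v with hh
  have hc1 : Continuous fun y : ↥Zs × U × V => (((Φ y.1 : ↥Zs) : Euc n), y.2.1, y.2.2) :=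
    (continuous_subtype_val.comp (Φ.continuous.comp continuous_fst)).prodMk
      ((continuous_fst.comp continuous_snd).prodMk (continuous_snd.comp continuous_snd))
  have hhc : Continuous fun y : ↥Zs × U × V => h y.1 y.2.1 y.2.2 := by
    have hF' : Continuous fun y : ↥Zs × U × V => F (Φ y.1 : Euc n) y.2.1 y.2.2 := hFc.comp hc1
    have hl' : Continuous fun y : ↥Zs × U × V => l (Φ y.1 : Euc n) y.2.1 y.2.2 := hlc.comp hc1
    have hp' : Continuous fun y : ↥Zs × U × V => (p y.1 : Euc n) := p.continuous.comp continuous_fst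
    exact (hF'.inner hp').add hl'
  obtain ⟨C, hC⟩ := exists_abs_bound hhc
  have hhuv : ∀ u v, Continuous fun x : ↥Zs => h x u v := fun u v =>
    hhc.comp (continuous_id.prodMk (continuous_const.prodMk continuous_const))
  have hint : ∀ u v, Integrable (fun x : ↥Zs => h x u v) μ := fun u v =>
    ⟨(hhuv u v).aestronglyMeasurable, HasFiniteIntegral.of_bounded (C := C)
      (Filter.Eventually.of_forall fun x => by simpa [Real.norm_eq_abs] using hC (x, u, v))⟩
  set g : U → V → ℝ := fun u v => ∫ x, h x u v ∂μ with hg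
  have hgb : ∀ u v, |g u v| ≤ C := by
    intro u v
    have := norm_integral_le_of_norm_le_const (μ := μ) (f := fun x => h x u v) (C := C)
      (Filter.Eventually.of_forall fun x => by simpa [Real.norm_eq_abs] using hC (x, u, v))
    simpa [Real.norm_eq_abs, measure_univ] using this
  show (⨅ u, ⨆ v, g u v) = ⨆ v, ⨅ u, g u v
  refine isc_of_approx g C hgb fun ε hε => ?_
  -- uniform continuity in the Z variable, uniformly in (u, v)
  have huc := CompactSpace.uniformContinuous_of_continuous hhc
  rw [Metric.uniformContinuous_iff] at huc
  obtain ⟨δ, hδ0, hδ⟩ := huc ε hε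
  have key : ∀ x y : ↥Zs, dist x y < δ → ∀ u v, |h x u v - h y u v| ≤ ε := by
    intro x y hxy u v
    have hd : dist ((x, u, v) : ↥Zs × U × V) (y, u, v) < δ := by
      simp only [Prod.dist_eq, dist_self, max_self]
      exact max_lt hxy (by simpa using hδ0)
    exact le_of_lt (by simpa [Real.dist_eq] using hδ hd)
  -- finite cover by δ-balls
  obtain ⟨t, ht⟩ := isCompact_univ.elim_finite_subcover (fun x : ↥Zs => Metric.ball x δ)
    (fun x => Metric.isOpen_ball) (fun x _ => mem_iUnion.mpr ⟨x, Metric.mem_ball_self hδ0⟩)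
  have htne : t.Nonempty := by
    by_contra hte
    rw [Finset.not_nonempty_iff_eq_empty] at hte
    have := ht (mem_univ (Classical.ofNonempty : ↥Zs))
    simp [hte] at this
  set k := t.card with hk'
  have hk : 1 ≤ k := Finset.card_pos.mpr htne
  set c : Fin k → ↥Zs := fun j => ((t.equivFin.symm j : t) : ↥Zs) with hc
  have hcov : ∀ x : ↥Zs, ∃ j, x ∈ Metric.ball (c j) δ := by
    intro x
    have hx := ht (mem_univ x)
    rw [mem_iUnion₂] at hx
    obtain ⟨y, hy, hxy⟩ := hx
    exact ⟨t.equivFin ⟨y, hy⟩, by simpa [hc, Equiv.symm_apply_apply] using hxy⟩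
  set A : Fin k → Set ↥Zs :=
    fun j => Metric.ball (c j) δ \ ⋃ (i : Fin k) (_ : i < j), Metric.ball (c i) δ with hA
  have hAm : ∀ j, MeasurableSet (A j) := fun j =>
    Metric.isOpen_ball.measurableSet.diff
      (MeasurableSet.iUnion fun i => MeasurableSet.iUnion fun _ => Metric.isOpen_ball.measurableSet)
  have hAd : Pairwise (Function.onFun Disjoint A) := by
    intro i j hij
    rcases lt_or_gt_of_ne hij with h' | h'
    · rw [Function.onFun, Set.disjoint_left]
      intro x hxi hxj
      exact hxj.2 (mem_iUnion₂.mpr ⟨i, h', hxi.1⟩)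
    · rw [Function.onFun, Set.disjoint_right]
      intro x hxj hxi
      exact hxi.2 (mem_iUnion₂.mpr ⟨j, h', hxj.1⟩)
  have hAu : ⋃ j, A j = univ := by
    refine eq_univ_of_forall fun x => ?_
    obtain ⟨j, hj⟩ := hcov x
    obtain ⟨j₀, hj₀m, hj₀min⟩ := Finset.exists_min_image
      (Finset.univ.filter fun i => x ∈ Metric.ball (c i) δ) id ⟨j, Finset.mem_filter.mpr ⟨Finset.mem_univ _, hj⟩⟩
    refine mem_iUnion.mpr ⟨j₀, (Finset.mem_filter.mp hj₀m).2, fun hmem => ?_⟩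
    rw [mem_iUnion₂] at hmem
    obtain ⟨i, hi, hxib⟩ := hmem
    exact absurd (hj₀min i (Finset.mem_filter.mpr ⟨Finset.mem_univ _, hxib⟩)) (not_le.mpr hi)
  have hAq : ∑ j, μ (A j) = 1 := by
    have hmu := measure_iUnion hAd hAm (μ := μ)
    rw [hAu, measure_univ, tsum_fintype] at hmu
    exact hmu.symm
  set q' : Fin k → ℝ := fun j => (μ (A j)).toReal with hq'
  have hq'0 : ∀ j, 0 ≤ q' j := fun j => ENNReal.toReal_nonneg
  have hq'1 : ∑ j, q' j = 1 := by
    rw [hq']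
    rw [← ENNReal.toReal_sum (fun j _ => measure_ne_top μ _), hAq, ENNReal.toReal_one]
  have happrox : ∀ u v, |g u v - ∑ j, q' j * h (c j) u v| ≤ ε := by
    intro u v
    have hdecomp : g u v = ∑ j, ∫ x in A j, h x u v ∂μ := by
      rw [hg]
      simp only
      rw [← setIntegral_univ, ← hAu, integral_iUnion hAm hAd ((hint u v).integrableOn),
        tsum_fintype]
    have hterm : ∀ j, |(∫ x in A j, h x u v ∂μ) - q' j * h (c j) u v| ≤ ε * q' j := by
      intro j
      have hconst : ∫ _ in A j, h (c j) u v ∂μ = q' j * h (c j) u v := by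
        rw [setIntegral_const, hq']; simp [smul_eq_mul, measureReal_def]
      have hsub : (∫ x in A j, h x u v ∂μ) - q' j * h (c j) u v
          = ∫ x in A j, (h x u v - h (c j) u v) ∂μ := by
        rw [integral_sub ((hint u v).integrableOn)
          (integrableOn_const (measure_ne_top μ _)), hconst]
      rw [hsub]
      have hb := norm_setIntegral_le_of_norm_le_const (μ := μ) (s := A j)
        (f := fun x => h x u v - h (c j) u v) (C := ε) (measure_lt_top μ (A j))
        (fun x hx => by
          simpa [Real.norm_eq_abs] using key x (c j) (Metric.mem_ball.mp hx.1) u v)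
      simpa [Real.norm_eq_abs, hq', measureReal_def] using hb
    calc |g u v - ∑ j, q' j * h (c j) u v|
        = |∑ j, ((∫ x in A j, h x u v ∂μ) - q' j * h (c j) u v)| := by
          rw [hdecomp, ← Finset.sum_sub_distrib]
      _ ≤ ∑ j, |(∫ x in A j, h x u v ∂μ) - q' j * h (c j) u v| :=
          Finset.abs_sum_le_sum_abs _ _
      _ ≤ ∑ j, ε * q' j := Finset.sum_le_sum fun j _ => hterm j
      _ = ε := by rw [← Finset.mul_sum, hq'1, mul_one]
  refine ⟨fun u v => ∑ j, q' j * h (c j) u v, happrox, ?_⟩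
  exact h4 k hk q' hq'0 hq'1 (fun j => (Φ (c j) : Euc n)) (fun j => (Φ (c j)).2)
    (fun j => p (c j))

lemma ic3_to_ic4
    {n : ℕ} {Zs : Set (Euc n)} (hZc : IsCompact Zs) (hZn : Zs.Nonempty)
    {U V : Type} [MetricSpace U] [CompactSpace U] [Nonempty U]
    [MetricSpace V] [CompactSpace V] [Nonempty V]
    {F : Euc n → U → V → Euc n} {l : Euc n → U → V → ℝ}
    (hFc : Continuous fun q : Euc n × U × V => F q.1 q.2.1 q.2.2)
    (hlc : Continuous fun q : Euc n × U × V => l q.1 q.2.1 q.2.2)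
    (hFb : ∃ M : ℝ, ∀ w a b, ‖F w a b‖ ≤ M)
    (hlb : ∃ M : ℝ, ∀ w a b, |l w a b| ≤ M)
    (h3 : ∀ μ : Measure ↥Zs, IsProbabilityMeasure μ →
        ∀ p : C(↥Zs, Euc n),
          (⨅ u : U, ⨆ v : V, ∫ z, icIntegrand F l (z : Euc n) (p z) u v ∂μ) =
            ⨆ v : V, ⨅ u : U, ∫ z, icIntegrand F l (z : Euc n) (p z) u v ∂μ) :
    ∀ I : ℕ, 1 ≤ I → ∀ q : Fin I → ℝ, (∀ i, 0 ≤ q i) → (∑ i, q i) = 1 →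
        ∀ z : Fin I → Euc n, (∀ i, z i ∈ Zs) → ∀ p : Fin I → Euc n,
          (⨅ u : U, ⨆ v : V, ∑ i, q i * icIntegrand F l (z i) (p i) u v) =
            ⨆ v : V, ⨅ u : U, ∑ i, q i * icIntegrand F l (z i) (p i) u v := by
  classical
  intro I hI q hq0 hq1 z hz p
  haveI : CompactSpace ↥Zs := isCompact_iff_compactSpace.mp hZc
  set S : Finset (Euc n) := Finset.image z Finset.univ with hS
  set Qw : Euc n → ℝ := fun w => ∑ i ∈ Finset.univ.filter (fun i => z i = w), q i with hQw
  set valf : Euc n → Euc n := fun w =>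
    (Qw w)⁻¹ • ∑ i ∈ Finset.univ.filter (fun i => z i = w), q i • p i with hvalf
  obtain ⟨f, hfc, hfS⟩ := exists_continuous_eq_on_finset S valf
  set pt : C(↥Zs, Euc n) := ⟨fun x => f (x : Euc n), hfc.comp continuous_subtype_val⟩ with hpt
  set μ : Measure ↥Zs :=
    ∑ i, (ENNReal.ofReal (q i)) • Measure.dirac (⟨z i, hz i⟩ : ↥Zs) with hμ
  have hprob : IsProbabilityMeasure μ := by
    constructor
    rw [hμ]
    simp only [Measure.coe_finset_sum, Finset.sum_apply, Measure.smul_apply,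
      Measure.dirac_apply_of_mem (mem_univ _), smul_eq_mul, mul_one]
    rw [← ENNReal.ofReal_sum_of_nonneg (fun i _ => hq0 i), hq1, ENNReal.ofReal_one]
  -- key: Qw w • valf w = ∑ over fiber of q i • p i
  have hkeyw : ∀ w, Qw w • valf w = ∑ i ∈ Finset.univ.filter (fun i => z i = w), q i • p i := by
    intro w
    by_cases hQ : Qw w = 0
    · have : ∀ i ∈ Finset.univ.filter (fun i => z i = w), q i = 0 := by
        intro i hi
        exact (Finset.sum_eq_zero_iff_of_nonneg (fun j _ => hq0 j)).mp hQ i hi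
      rw [hQ, zero_smul, Finset.sum_eq_zero]
      intro i hi; rw [this i hi, zero_smul]
    · rw [hvalf]; simp only
      rw [smul_smul, mul_inv_cancel₀ hQ, one_smul]
  -- fiberwise sum identity
  have hsum : ∀ u v, (∑ i, q i * icIntegrand F l (z i) (p i) u v)
      = ∑ i, q i * icIntegrand F l (z i) (f (z i)) u v := by
    intro u v
    simp only [icIntegrand, mul_add]
    rw [Finset.sum_add_distrib, Finset.sum_add_distrib]
    congr 1
    have hmaps : ∀ i ∈ Finset.univ, z i ∈ S := fun i _ => Finset.mem_image_of_mem z (Finset.mem_univ i)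
    rw [← Finset.sum_fiberwise_of_maps_to hmaps (fun i => q i * (inner ℝ (F (z i) u v) (p i) : ℝ)),
        ← Finset.sum_fiberwise_of_maps_to hmaps (fun i => q i * (inner ℝ (F (z i) u v) (f (z i)) : ℝ))]
    refine Finset.sum_congr rfl fun w hw => ?_
    have hl : ∀ i ∈ Finset.univ.filter (fun i => z i = w),
        q i * (inner ℝ (F (z i) u v) (p i) : ℝ) = (inner ℝ (F w u v) (q i • p i) : ℝ) := by
      intro i hi
      have hzi : z i = w := (Finset.mem_filter.mp hi).2
      rw [hzi, real_inner_smul_right]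
    have hr : ∀ i ∈ Finset.univ.filter (fun i => z i = w),
        q i * (inner ℝ (F (z i) u v) (f (z i)) : ℝ) = q i * (inner ℝ (F w u v) (valf w) : ℝ) := by
      intro i hi
      have hzi : z i = w := (Finset.mem_filter.mp hi).2
      rw [hzi, hfS w hw]
    rw [Finset.sum_congr rfl hl, Finset.sum_congr rfl hr, ← inner_sum, ← hkeyw w,
        real_inner_smul_right, ← Finset.sum_mul]
  -- integral identity
  have hires : ∀ u v, (∫ x, icIntegrand F l (x : Euc n) (pt x) u v ∂μ)
      = ∑ i, q i * icIntegrand F l (z i) (f (z i)) u v := by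
    intro u v
    have hgc : Continuous fun x : ↥Zs => icIntegrand F l (x : Euc n) (pt x) u v := by
      have hpc : Continuous fun x : ↥Zs => ((x : Euc n), u, v) :=
        continuous_subtype_val.prodMk (continuous_const.prodMk continuous_const)
      have h1 : Continuous fun x : ↥Zs => F (x : Euc n) u v := hFc.comp hpc
      have h2 : Continuous fun x : ↥Zs => l (x : Euc n) u v := hlc.comp hpc
      exact (h1.inner (pt.continuous)).add h2
    rw [hμ, integral_finset_sum_measure]
    · refine Finset.sum_congr rfl fun i _ => ?_
      rw [integral_smul_measure, integral_dirac, ENNReal.toReal_ofReal (hq0 i)]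
      simp only [smul_eq_mul, hpt, ContinuousMap.coe_mk]
    · intro i _
      refine Integrable.smul_measure ?_ ENNReal.ofReal_ne_top
      refine ⟨hgc.aestronglyMeasurable, ?_⟩
      haveI : IsFiniteMeasure (Measure.dirac (⟨z i, hz i⟩ : ↥Zs)) := inferInstance
      obtain ⟨C, hC⟩ := ((isCompact_univ).image_of_continuousOn
        (hgc.continuousOn)).isBounded.subset_closedBall 0
      refine HasFiniteIntegral.of_bounded (C := C) (Filter.Eventually.of_forall fun x => ?_)
      have := hC ⟨x, mem_univ x, rfl⟩
      simpa [Metric.mem_closedBall, Real.dist_eq] using this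
  have hmain := h3 μ hprob pt
  have e1 : ∀ u : U, (⨆ v : V, ∑ i, q i * icIntegrand F l (z i) (p i) u v)
      = ⨆ v : V, ∫ x, icIntegrand F l (x : Euc n) (pt x) u v ∂μ := fun u =>
    iSup_congr fun v => by rw [hsum u v, hires u v]
  have e2 : ∀ v : V, (⨅ u : U, ∑ i, q i * icIntegrand F l (z i) (p i) u v)
      = ⨅ u : U, ∫ x, icIntegrand F l (x : Euc n) (pt x) u v ∂μ := fun v =>
    iInf_congr fun u => by rw [hsum u v, hires u v]
  rw [iInf_congr e1, iSup_congr e2, hmain]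

/-- Equivalence of the Isaacs conditions (IC3), (IC4) and (IC5). -/
theorem isaacs_conditions_equivalent
    (n : ℕ) (Zs : Set (Euc n)) (hZc : IsCompact Zs) (hZn : Zs.Nonempty)
    (U V : Type) [MetricSpace U] [CompactSpace U] [Nonempty U]
    [MetricSpace V] [CompactSpace V] [Nonempty V]
    (F : Euc n → U → V → Euc n) (l : Euc n → U → V → ℝ)
    (hFc : Continuous fun q : Euc n × U × V => F q.1 q.2.1 q.2.2)
    (hlc : Continuous fun q : Euc n × U × V => l q.1 q.2.1 q.2.2)
    (hFb : ∃ M : ℝ, ∀ w a b, ‖F w a b‖ ≤ M)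
    (hlb : ∃ M : ℝ, ∀ w a b, |l w a b| ≤ M) :
    ((∀ μ : Measure ↥Zs, IsProbabilityMeasure μ →
        ∀ p : C(↥Zs, Euc n),
          (⨅ u : U, ⨆ v : V, ∫ z, icIntegrand F l (z : Euc n) (p z) u v ∂μ) =
            ⨆ v : V, ⨅ u : U, ∫ z, icIntegrand F l (z : Euc n) (p z) u v ∂μ) ↔
      (∀ I : ℕ, 1 ≤ I → ∀ q : Fin I → ℝ, (∀ i, 0 ≤ q i) → (∑ i, q i) = 1 →
        ∀ z : Fin I → Euc n, (∀ i, z i ∈ Zs) → ∀ p : Fin I → Euc n,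
          (⨅ u : U, ⨆ v : V, ∑ i, q i * icIntegrand F l (z i) (p i) u v) =
            ⨆ v : V, ⨅ u : U, ∑ i, q i * icIntegrand F l (z i) (p i) u v)) ∧
    ((∀ μ : Measure ↥Zs, IsProbabilityMeasure μ →
        ∀ p : C(↥Zs, Euc n),
          (⨅ u : U, ⨆ v : V, ∫ z, icIntegrand F l (z : Euc n) (p z) u v ∂μ) =
            ⨆ v : V, ⨅ u : U, ∫ z, icIntegrand F l (z : Euc n) (p z) u v ∂μ) ↔
      (∀ μ : Measure ↥Zs, IsProbabilityMeasure μ →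
        ∀ Φ : C(↥Zs, ↥Zs), ∀ p : C(↥Zs, Euc n),
          (⨅ u : U, ⨆ v : V, ∫ z, icIntegrand F l ((Φ z : Euc n)) (p z) u v ∂μ) =
            ⨆ v : V, ⨅ u : U, ∫ z, icIntegrand F l ((Φ z : Euc n)) (p z) u v ∂μ)) := by
  have h34 := fun h3 => ic3_to_ic4 hZc hZn hFc hlc hFb hlb h3
  have h45 := fun h4 => ic4_to_ic5 hZc hZn hFc hlc h4
  have h53 : (∀ μ : Measure ↥Zs, IsProbabilityMeasure μ →
      ∀ Φ : C(↥Zs, ↥Zs), ∀ p : C(↥Zs, Euc n),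
        (⨅ u : U, ⨆ v : V, ∫ z, icIntegrand F l ((Φ z : Euc n)) (p z) u v ∂μ) =
          ⨆ v : V, ⨅ u : U, ∫ z, icIntegrand F l ((Φ z : Euc n)) (p z) u v ∂μ) →
      (∀ μ : Measure ↥Zs, IsProbabilityMeasure μ →
      ∀ p : C(↥Zs, Euc n),
        (⨅ u : U, ⨆ v : V, ∫ z, icIntegrand F l (z : Euc n) (p z) u v ∂μ) =
          ⨆ v : V, ⨅ u : U, ∫ z, icIntegrand F l (z : Euc n) (p z) u v ∂μ) := by
    intro h5 μ hμ p
    simpa using h5 μ hμ (ContinuousMap.id _) p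
  exact ⟨⟨h34, fun h4 => h53 (h45 h4)⟩, ⟨fun h3 => h45 (h34 h3), h53⟩⟩
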